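/- Let a < b be coprime positive integers, let D be an a,b-Dyck path, and let F ⊆ F(D). Suppose there exists a valley P of D whose laser diagonal d(P) does not belong to F. Then there exists an a,b-Dyck path D' such that F ⊆ F(D') and λ(D') ⊊ λ(D). -/
import Mathlib


/-- `S(a,b) = { ⌊ib/a⌋ : i = 1, …, a-1 }`. -/
def Sab (a b : ℕ) : Finset ℕ := (Finset.Icc 1 (a - 1)).image (fun i => i * b / a)

/-- A diagonal of the polygon `P_{b+1}` with boundary points `0, 1, …, b`:
a pair `i < j` with `j - i ≥ 2` and `(i, j) ≠ (0, b)`. -/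
def IsDiagonal (b i j : ℕ) : Prop := i + 2 ≤ j ∧ j ≤ b ∧ ¬(i = 0 ∧ j = b)

/-- A diagonal `ij` is `a,b`-admissible if it separates `j - i - 1` and `b - j + i`
boundary points, both of which lie in `S(a,b)`. -/
def Admissible (a b : ℕ) (d : ℕ × ℕ) : Prop :=
  IsDiagonal b d.1 d.2 ∧ d.2 - d.1 - 1 ∈ Sab a b ∧ b - d.2 + d.1 ∈ Sab a b

/-- Two diagonals `ij` and `km` cross if `i < k < j < m` or `k < i < m < j`. -/
def Crosses (d d' : ℕ × ℕ) : Prop :=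
  (d.1 < d'.1 ∧ d'.1 < d.2 ∧ d.2 < d'.2) ∨ (d'.1 < d.1 ∧ d.1 < d'.2 ∧ d'.2 < d.2)

/-- An `a,b`-Dyck path: a north/east lattice path from `(0,0)` to `(b,a)` staying weakly
above `y = (a/b) x`.  It is encoded by the height `h u` of its unique east step over the
column interval `[u, u+1]`, for `0 ≤ u < b`; we normalize `h u = a` for `u ≥ b`. -/
structure DyckPath (a b : ℕ) where
  h : ℕ → ℕ
  mono : Monotone h
  norm : ∀ x, b ≤ x → h x = a
  above : ∀ x, x < b → a * (x + 1) ≤ b * h x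

/-- The lattice point `(x, y)` lies on `D` at the bottom of a north step of `D`. -/
def BottomNorth (a b : ℕ) (D : DyckPath a b) (x y : ℕ) : Prop :=
  x ≤ b ∧ (if x = 0 then 0 else D.h (x - 1)) ≤ y ∧ y < D.h x

/-- The laser of slope `a/b` fired northeast from the lattice point `(x, y)` of `D` first
hits `D` in the interior of the east step whose right endpoint has `x`-coordinate `k`;
the associated laser diagonal is `d(P) = (x, k)`.  The laser passes strictly below the
right endpoint of every earlier east step and strictly above the one it hits. -/
def IsLaserDiag (a b : ℕ) (D : DyckPath a b) (x y k : ℕ) : Prop :=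
  x < k ∧ k ≤ b ∧ b * D.h (k - 1) < b * y + a * (k - x) ∧
    ∀ u, x ≤ u → u + 1 < k → b * y + a * (u + 1 - x) < b * D.h u

/-- `F(D)`: the set of laser diagonals `d(P)` of the lattice points `P ≠ (0,0)` at the
bottoms of north steps of `D`. -/
def FD (a b : ℕ) (D : DyckPath a b) : Set (ℕ × ℕ) :=
  { d | ∃ y, BottomNorth a b D d.1 y ∧ (d.1, y) ≠ (0, 0) ∧ IsLaserDiag a b D d.1 y d.2 }

/-- A finite abstract simplicial complex on the ground set `E`: a downward closed
collection of finite subsets of `E`. -/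
structure AbsCplx (E : Type*) where
  faces : Set (Finset E)
  down : ∀ F ∈ faces, ∀ F' ⊆ F, F' ∈ faces

/-- The rational associahedron `Âss(a,b)`: faces are the sets of pairwise noncrossing
`a,b`-admissible diagonals. -/
def hatAss (a b : ℕ) : AbsCplx (ℕ × ℕ) where
  faces := { F | (∀ d ∈ F, Admissible a b d) ∧ ∀ d ∈ F, ∀ d' ∈ F, ¬Crosses d d' }
  down := fun F hF F' hsub =>
    ⟨fun d hd => hF.1 d (hsub hd), fun d hd d' hd' => hF.2 d (hsub hd) d' (hsub hd')⟩

/-- The rational associahedron `Ass(a,b)`: faces are the subsets of the sets `F(D)`,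
as `D` ranges over `a,b`-Dyck paths. -/
def Ass (a b : ℕ) : AbsCplx (ℕ × ℕ) where
  faces := { F | ∃ D : DyckPath a b, ∀ d ∈ F, d ∈ FD a b D }
  down := fun F hF F' hsub =>
    let ⟨D, hD⟩ := hF
    ⟨D, fun d hd => hD d (hsub hd)⟩

/-- `(x, D.h (x-1))` is a valley of `D`: it is immediately preceded by an east step and
immediately succeeded by a north step. -/
def IsValley (a b : ℕ) (D : DyckPath a b) (x : ℕ) : Prop :=
  1 ≤ x ∧ x ≤ b ∧ D.h (x - 1) < D.h x

/-- The `r`-th entry (rows counted from the top, `1 ≤ r ≤ a`) of the partition `λ(D)`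
cut out to the northwest of `D` inside the `a × b` rectangle. -/
def lam (a b : ℕ) (D : DyckPath a b) (r : ℕ) : ℕ :=
  ((Finset.range b).filter fun u => D.h u ≤ a - r).card

/-- Laser diagonals from a fixed lattice point are unique. -/
lemma laser_diag_unique {a b : ℕ} {D : DyckPath a b} {x y k k' : ℕ}
    (h1 : IsLaserDiag a b D x y k) (h2 : IsLaserDiag a b D x y k') : k = k' := by
  obtain ⟨hxk, hkb, hhit, hbel⟩ := h1
  obtain ⟨hxk', hkb', hhit', hbel'⟩ := h2
  by_contra hne
  rcases Nat.lt_or_ge k k' with h | h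
  · have hb := hbel' (k - 1) (by omega) (by omega)
    have he : k - 1 + 1 = k := by omega
    rw [he] at hb
    linarith
  · have h' : k' < k := by omega
    have hb := hbel (k' - 1) (by omega) (by omega)
    have he : k' - 1 + 1 = k' := by omega
    rw [he] at hb
    linarith

lemma lam_mono {a b : ℕ} {D D' : DyckPath a b} (h : ∀ u, D.h u ≤ D'.h u) (r : ℕ) :
    lam a b D' r ≤ lam a b D r := by
  apply Finset.card_le_card
  intro u hu
  simp only [Finset.mem_filter, Finset.mem_range] at hu ⊢
  exact ⟨hu.1, le_trans (h u) hu.2⟩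

lemma lam_strict {a b : ℕ} {D D' : DyckPath a b} (h : ∀ u, D.h u ≤ D'.h u)
    (u0 : ℕ) (hu0 : u0 < b) (hlt : D.h u0 < D'.h u0) (hua : D.h u0 ≤ a) :
    lam a b D' (a - D.h u0) < lam a b D (a - D.h u0) := by
  apply Finset.card_lt_card
  rw [Finset.ssubset_def]
  constructor
  · intro u hu
    simp only [Finset.mem_filter, Finset.mem_range] at hu ⊢
    exact ⟨hu.1, le_trans (h u) hu.2⟩
  · intro hsub
    have h1 : u0 ∈ (Finset.range b).filter (fun u => D.h u ≤ a - (a - D.h u0)) := by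
      simp only [Finset.mem_filter, Finset.mem_range]
      omega
    have h2 := hsub h1
    simp only [Finset.mem_filter, Finset.mem_range] at h2
    omega

/-- Let `D` be an `a,b`-Dyck path, `F ⊆ F(D)`, and suppose some valley `P` of `D` has
laser diagonal `d(P) ∉ F`.  Then there is an `a,b`-Dyck path `D'` with `F ⊆ F(D')` and
`λ(D') ⊊ λ(D)`. -/
theorem exists_smaller_dyck_path (a b : ℕ) (ha : 0 < a) (hab : a < b)
    (hcop : Nat.Coprime a b) (D : DyckPath a b) (F : Set (ℕ × ℕ)) (hF : F ⊆ FD a b D)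
    (x k : ℕ) (hval : IsValley a b D x)
    (hlas : IsLaserDiag a b D x (D.h (x - 1)) k) (hnot : (x, k) ∉ F) :
    ∃ D' : DyckPath a b, F ⊆ FD a b D' ∧
      (∀ r, lam a b D' r ≤ lam a b D r) ∧ (∃ r, lam a b D' r < lam a b D r) := by
  classical
  obtain ⟨hx1, hxb, hvalley⟩ := hval
  have hha : D.h x ≤ a := le_trans (D.mono hxb) (le_of_eq (D.norm b le_rfl))
  -- x' : left end of the block to be raised
  set x' : ℕ := Nat.findGreatest
      (fun c => ∃ k', x + 1 < k' ∧ IsLaserDiag a b D c (D.h (c - 1)) k') (x - 1) with hx'def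
  have hx'x : x' < x := by
    have h1 : x' ≤ x - 1 := by rw [hx'def]; exact Nat.findGreatest_le _
    omega
  have hVle : ∀ c k', c < x → x + 1 < k' → IsLaserDiag a b D c (D.h (c - 1)) k' → c ≤ x' := by
    intro c k' hc hk hl
    rw [hx'def]
    exact Nat.le_findGreatest (by omega) ⟨k', hk, hl⟩
  have hx'spec : x' ≠ 0 → ∃ k', x + 1 < k' ∧ IsLaserDiag a b D x' (D.h (x' - 1)) k' :=
    fun h => (Nat.findGreatest_eq_iff.mp hx'def.symm).2.1 h
  -- C1 : lasers from strictly left of the block cannot land inside (x', x]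
  have hC1 : ∀ x0 y0 k0, IsLaserDiag a b D x0 y0 k0 → x0 < x' → k0 ≤ x → k0 ≤ x' := by
    intro x0 y0 k0 hld hx0 hk0
    by_contra hgt
    push_neg at hgt
    obtain ⟨k', hk'x, hB⟩ := hx'spec (by omega)
    obtain ⟨hAxk, hAkb, hAhit, hAbel⟩ := hld
    obtain ⟨hBxk, hBkb, hBhit, hBbel⟩ := hB
    have e1 := hAbel (x' - 1) (by omega) (by omega)
    have e1' : x' - 1 + 1 = x' := by omega
    rw [e1'] at e1
    have e2 := hBbel (k0 - 1) (by omega) (by omega)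
    have e2' : k0 - 1 + 1 = k0 := by omega
    rw [e2'] at e2
    have esplit : a * (k0 - x0) = a * (x' - x0) + a * (k0 - x') := by
      rw [← Nat.mul_add]
      congr 1
      omega
    linarith
  -- the raised path
  set h' : ℕ → ℕ := fun u => if x' ≤ u ∧ u < x then D.h u + 1 else D.h u with hh'
  have hfun : ∀ u, h' u = if x' ≤ u ∧ u < x then D.h u + 1 else D.h u := fun u => rfl
  have hin : ∀ u, x' ≤ u → u < x → h' u = D.h u + 1 := by
    intro u h1 h2
    rw [hfun]
    exact if_pos ⟨h1, h2⟩
  have hout : ∀ u, ¬(x' ≤ u ∧ u < x) → h' u = D.h u := by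
    intro u hu
    rw [hfun]
    exact if_neg hu
  have hge : ∀ u, D.h u ≤ h' u := by
    intro u
    by_cases hu : x' ≤ u ∧ u < x
    · rw [hin u hu.1 hu.2]; omega
    · rw [hout u hu]
  have hmono : Monotone h' := by
    apply monotone_nat_of_le_succ
    intro u
    have hmle : D.h u ≤ D.h (u + 1) := D.mono (Nat.le_add_right u 1)
    by_cases h1 : x' ≤ u ∧ u < x <;> by_cases h2 : x' ≤ u + 1 ∧ u + 1 < x
    · rw [hin u h1.1 h1.2, hin (u + 1) h2.1 h2.2]
      omega
    · rw [hin u h1.1 h1.2, hout (u + 1) h2]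
      have hux2 : u + 1 = x := by omega
      rw [hux2]
      have hux : u = x - 1 := by omega
      rw [hux]
      omega
    · rw [hout u h1, hin (u + 1) h2.1 h2.2]
      omega
    · rw [hout u h1, hout (u + 1) h2]
      exact hmle
  have hnorm : ∀ u, b ≤ u → h' u = a := by
    intro u hu
    rw [hout u (by omega)]
    exact D.norm u hu
  have habove : ∀ u, u < b → a * (u + 1) ≤ b * h' u := by
    intro u hu
    calc a * (u + 1) ≤ b * D.h u := D.above u hu
    _ ≤ b * h' u := Nat.mul_le_mul le_rfl (hge u)
  set D' : DyckPath a b := ⟨h', hmono, hnorm, habove⟩ with hD'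
  have hD'h : ∀ u, D'.h u = h' u := fun _ => rfl
  refine ⟨D', ?_, fun r => lam_mono hge r, ?_⟩
  · -- F ⊆ FD a b D'
    intro d hd
    obtain ⟨x0, k0⟩ := d
    have hdxk : ¬(x0 = x ∧ k0 = k) := by
      rintro ⟨rfl, rfl⟩
      exact hnot hd
    have hmem := hF hd
    simp only [FD, Set.mem_setOf_eq] at hmem ⊢
    obtain ⟨y0, hbn, hne0, hld⟩ := hmem
    have hld' := hld
    obtain ⟨hx0b, hlow, hupp⟩ := hbn
    obtain ⟨hxk0, hk0b, hhit0, hbel0⟩ := hld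
    by_cases hcase : x' ≤ x0 ∧ x0 < x ∧ k0 ≤ x + 1
    · -- translated point (x0, y0 + 1)
      obtain ⟨hc1, hc2, hc3⟩ := hcase
      refine ⟨y0 + 1, ⟨hx0b, ?_, ?_⟩, by simp, hxk0, hk0b, ?_, ?_⟩
      · -- lower bound
        simp only [hD'h]
        by_cases h0 : x0 = 0
        · simp [h0]
        · rw [if_neg h0]
          rw [if_neg h0] at hlow
          by_cases hxx' : x0 = x'
          · rw [hout (x0 - 1) (by omega)]
            omega
          · rw [hin (x0 - 1) (by omega) (by omega)]
            omega
      · rw [hD'h, hin x0 hc1 hc2]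
        omega
      · -- hit condition
        simp only [hD'h]
        by_cases hkx : k0 - 1 < x
        · rw [hin (k0 - 1) (by omega) hkx]
          linarith
        · rw [hout (k0 - 1) (by omega)]
          linarith
      · -- below conditions
        intro u hu1 hu2
        rw [hD'h, hin u (by omega) (by omega)]
        have := hbel0 u hu1 hu2
        linarith
    · -- original point (x0, y0)
      push_neg at hcase
      refine ⟨y0, ⟨hx0b, ?_, ?_⟩, hne0, hxk0, hk0b, ?_, ?_⟩
      · -- lower bound
        simp only [hD'h]
        by_cases h0 : x0 = 0
        · simp [h0]
        · rw [if_neg h0]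
          rw [if_neg h0] at hlow
          by_cases hb1 : x0 ≤ x'
          · rw [hout (x0 - 1) (by omega)]
            exact hlow
          · by_cases hb2 : x ≤ x0 - 1
            · rw [hout (x0 - 1) (by omega)]
              exact hlow
            · rw [hin (x0 - 1) (by omega) (by omega)]
              rcases Nat.lt_or_ge (D.h (x0 - 1)) y0 with h | h
              · omega
              · exfalso
                have he : y0 = D.h (x0 - 1) := by omega
                have h1 : IsLaserDiag a b D x0 (D.h (x0 - 1)) k0 := by
                  rw [← he]
                  exact hld'
                by_cases hb3 : x0 = x
                · apply hdxk
                  refine ⟨hb3, ?_⟩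
                  have h2 : IsLaserDiag a b D x (D.h (x - 1)) k0 := by
                    rw [← hb3]
                    exact h1
                  exact laser_diag_unique h2 hlas
                · have hk0big : x + 1 < k0 := hcase (by omega) (by omega)
                  have := hVle x0 k0 (by omega) hk0big h1
                  omega
      · -- upper bound
        rw [hD'h]
        have := hge x0
        omega
      · -- hit condition
        simp only [hD'h]
        by_cases hkx : x < k0
        · rw [hout (k0 - 1) (by omega)]
          exact hhit0
        · have hx0x' : x0 < x' := by
            by_contra hcon
            push_neg at hcon
            have := hcase hcon (by omega)
            omega
          have hk0x' := hC1 x0 y0 k0 ⟨hxk0, hk0b, hhit0, hbel0⟩ hx0x' (by omega)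
          rw [hout (k0 - 1) (by omega)]
          exact hhit0
      · -- below conditions
        intro u hu1 hu2
        rw [hD'h]
        have h1 := hbel0 u hu1 hu2
        have h2 : b * D.h u ≤ b * h' u := Nat.mul_le_mul le_rfl (hge u)
        linarith
  · -- strict decrease
    refine ⟨a - D.h (x - 1), ?_⟩
    have hlt : D.h (x - 1) < h' (x - 1) := by
      rw [hin (x - 1) (by omega) (by omega)]
      omega
    exact lam_strict hge (x - 1) (by omega) hlt (le_trans (D.mono (by omega)) hha)
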